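/- Let R be a commutative Noetherian ring and let I = Q_1 ∩ … ∩ Q_k be a minimal primary decomposition, with Q_i P_i-primary. Let f ∈ R. Then for every integer l ≥ 1 such that (I : f^{l−1}) ≠ (I : f^l), one has l ≤ Σ_{i : f ∈ P_i} mult_I(P_i); equivalently, ℓ_f(I) ≤ Σ_{i : f ∈ P_i} mult_I(P_i). -/

import Mathlib

/-- There is a chain of ideals `Q_i ∩ I_i = J_ℓ ⊊ J_{ℓ-1} ⊊ … ⊊ J_1 = P ∩ I_i` of length
`ℓ` in which every `J_j` is of the form `R_j ∩ I_i` for some `P`-primary ideal `R_j`.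
Here `J k` denotes `J_{k+1}`. -/
def IsMultChain {R : Type*} [CommRing R] (Qi Ii P : Ideal R) (ℓ : ℕ) : Prop :=
  ∃ J : Fin ℓ → Ideal R,
    (∀ a b : Fin ℓ, a < b → J b < J a) ∧
    (∀ k : Fin ℓ, ∃ Rk : Ideal R, Rk.IsPrimary ∧ Rk.radical = P ∧ J k = Rk ⊓ Ii) ∧
    ∃ h : 0 < ℓ, J ⟨0, h⟩ = P ⊓ Ii ∧ J ⟨ℓ - 1, Nat.sub_lt h Nat.one_pos⟩ = Qi ⊓ Ii

/-- The multiplicity `mult_I(P)` of an associated prime `P` with primary component `Qi`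
and `I_i = ⋂ {Q_j | P_j ⊊ P}`: the supremum in `ℕ ∪ {∞}` of the lengths of the chains
above. -/
noncomputable def multOf {R : Type*} [CommRing R] (Qi Ii P : Ideal R) : ℕ∞ :=
  sSup { m : ℕ∞ | ∃ ℓ : ℕ, m = (ℓ : ℕ∞) ∧ IsMultChain Qi Ii P ℓ }

namespace MultAux

open Ideal

variable {R : Type*} [CommRing R]

/-- Saturation of an ideal `A` with respect to the complement of a prime `P`. -/
def sat (P : Ideal R) (hP : P.IsPrime) (A : Ideal R) : Ideal R where
  carrier := {x | ∃ s, s ∉ P ∧ s * x ∈ A}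
  add_mem' := by
    rintro x y ⟨s, hs, hsx⟩ ⟨t, ht, hty⟩
    refine ⟨s * t, fun h => ((hP.mem_or_mem h).elim hs ht), ?_⟩
    have h1 : s * t * (x + y) = t * (s * x) + s * (t * y) := by ring
    rw [h1]
    exact Ideal.add_mem _ (Ideal.mul_mem_left _ _ hsx) (Ideal.mul_mem_left _ _ hty)
  zero_mem' := ⟨1, (Ideal.ne_top_iff_one P).mp hP.ne_top, by simp⟩
  smul_mem' := by
    rintro c x ⟨s, hs, hsx⟩
    refine ⟨s, hs, ?_⟩
    have h1 : s * (c • x) = c * (s * x) := by simp only [smul_eq_mul]; ring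
    rw [h1]
    exact Ideal.mul_mem_left _ _ hsx

lemma le_sat {P : Ideal R} (hP : P.IsPrime) (A : Ideal R) : A ≤ sat P hP A := by
  intro x hx
  exact ⟨1, (Ideal.ne_top_iff_one P).mp hP.ne_top, by simpa using hx⟩

lemma sat_mono {P : Ideal R} (hP : P.IsPrime) {A B : Ideal R} (h : A ≤ B) :
    sat P hP A ≤ sat P hP B := by
  rintro x ⟨s, hs, hsx⟩
  exact ⟨s, hs, h hsx⟩

lemma sat_le_prime {P : Ideal R} (hP : P.IsPrime) {A : Ideal R} (h : A ≤ P) :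
    sat P hP A ≤ P := by
  rintro x ⟨s, hs, hsx⟩
  exact (hP.mem_or_mem (h hsx)).resolve_left hs

lemma sat_primary_self {P : Ideal R} (hP : P.IsPrime) {Q : Ideal R} (hQ : Q.IsPrimary)
    (hrad : Q.radical = P) : sat P hP Q = Q := by
  refine le_antisymm ?_ (le_sat hP Q)
  rintro x ⟨s, hs, hsx⟩
  rcases (Ideal.isPrimary_iff.mp hQ).2 (mul_comm s x ▸ hsx) with h | h
  · exact h
  · exact absurd (hrad ▸ h) hs

lemma sat_isPrimary {P : Ideal R} (hP : P.IsPrime) {Q A : Ideal R}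
    (hrad : Q.radical = P) (hQA : Q ≤ A) (hAP : A ≤ P) :
    (sat P hP A).IsPrimary ∧ (sat P hP A).radical = P := by
  have h1 : sat P hP A ≤ P := sat_le_prime hP hAP
  have hrad2 : (sat P hP A).radical = P := by
    refine le_antisymm ?_ ?_
    · calc (sat P hP A).radical ≤ P.radical := Ideal.radical_mono h1
        _ = P := hP.radical
    · calc P = Q.radical := hrad.symm
        _ ≤ (sat P hP A).radical := Ideal.radical_mono (hQA.trans (le_sat hP A))
  refine ⟨Ideal.isPrimary_iff.mpr ⟨?_, ?_⟩, hrad2⟩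
  · intro htop
    exact hP.ne_top (top_le_iff.mp (htop ▸ h1))
  · intro x y hxy
    by_cases hy : y ∈ P
    · right; rw [hrad2]; exact hy
    · left
      obtain ⟨s, hs, hsxy⟩ := hxy
      refine ⟨s * y, fun h => ((hP.mem_or_mem h).elim hs hy), ?_⟩
      have h2 : s * y * x = s * (x * y) := by ring
      rw [h2]
      exact hsxy

lemma chain_mono (E : ℕ → Ideal R) (r : ℕ) (h : ∀ j, j < r → E j < E (j + 1)) :
    ∀ b, b ≤ r → ∀ a, a < b → E a < E b := by
  intro b
  induction b with
  | zero => intro _ a ha; exact absurd ha (Nat.not_lt_zero a)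
  | succ n ih =>
    intro hb a ha
    rcases Nat.lt_succ_iff_lt_or_eq.mp ha with h' | h'
    · exact (ih (by omega) a h').trans (h n (by omega))
    · subst h'; exact h a (by omega)

lemma le_multOf_of_chain {Qi Ii P : Ideal R} (E : ℕ → Ideal R) (r : ℕ)
    (hstrict : ∀ j, j < r → E j < E (j + 1))
    (hform : ∀ j, j ≤ r → ∃ Rj : Ideal R, Rj.IsPrimary ∧ Rj.radical = P ∧ E j = Rj ⊓ Ii)
    (hbot : E 0 = Qi ⊓ Ii) (htop : E r = P ⊓ Ii) :
    ((r + 1 : ℕ) : ℕ∞) ≤ multOf Qi Ii P := by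
  apply le_sSup
  refine ⟨r + 1, rfl, fun a => E (r - a.val), ?_, ?_, Nat.succ_pos r, ?_, ?_⟩
  · intro a b hab
    have hb := b.isLt
    have hab' : a.val < b.val := hab
    exact chain_mono E r hstrict (r - a.val) (by omega) (r - b.val) (by omega)
  · intro k
    exact hform (r - k.val) (by omega)
  · simpa using htop
  · simpa using hbot

lemma le_multOf_of_chain' {Qi Ii P : Ideal R} (hP : P.IsPrime) (E : ℕ → Ideal R) (r : ℕ)
    (hstrict : ∀ j, j < r → E j < E (j + 1))
    (hform : ∀ j, j ≤ r → ∃ Rj : Ideal R, Rj.IsPrimary ∧ Rj.radical = P ∧ E j = Rj ⊓ Ii)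
    (hbot : E 0 = Qi ⊓ Ii) (htop : E r ≤ P ⊓ Ii) :
    ((r + 1 : ℕ) : ℕ∞) ≤ multOf Qi Ii P := by
  by_cases heq : E r = P ⊓ Ii
  · exact le_multOf_of_chain E r hstrict hform hbot heq
  · have hmain := le_multOf_of_chain (Qi := Qi) (Ii := Ii) (P := P)
      (fun j => if j ≤ r then E j else P ⊓ Ii) (r + 1) ?_ ?_ ?_ ?_
    · calc ((r + 1 : ℕ) : ℕ∞) ≤ ((r + 1 + 1 : ℕ) : ℕ∞) := by exact_mod_cast Nat.le_succ _
        _ ≤ _ := hmain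
    · intro j hj
      rcases Nat.lt_succ_iff_lt_or_eq.mp hj with h' | h'
      · simpa [Nat.le_of_lt h', Nat.succ_le_of_lt h'] using hstrict j h'
      · subst h'
        simpa [Nat.lt_irrefl] using lt_of_le_of_ne htop heq
    · intro j hj
      by_cases h' : j ≤ r
      · simpa [h'] using hform j h'
      · refine ⟨P, hP.isPrimary, hP.radical, by simp [h']⟩
    · simpa using hbot
    · simp

lemma one_le_multOf {Qi Ii P : Ideal R} (hP : P.IsPrime) (hQ : Qi.IsPrimary)
    (hrad : Qi.radical = P) : (1 : ℕ∞) ≤ multOf Qi Ii P := by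
  have h := le_multOf_of_chain' (Qi := Qi) (Ii := Ii) hP (fun _ => Qi ⊓ Ii) 0
    (fun j hj => absurd hj (Nat.not_lt_zero j))
    (fun j _ => ⟨Qi, hQ, hrad, rfl⟩) rfl
    (inf_le_inf_right _ (hrad ▸ Ideal.le_radical))
  simpa using h

def eltColon (Qt : Ideal R) (a : R) : Ideal R where
  carrier := {w | a * w ∈ Qt}
  add_mem' := by
    intro x y hx hy
    simp only [Set.mem_setOf_eq] at *
    rw [mul_add]; exact Ideal.add_mem _ hx hy
  zero_mem' := by simp
  smul_mem' := by
    intro c x hx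
    simp only [Set.mem_setOf_eq, smul_eq_mul] at *
    rw [show a * (c * x) = c * (a * x) by ring]
    exact Ideal.mul_mem_left _ _ hx

lemma mem_eltColon {Qt : Ideal R} {a w : R} : w ∈ eltColon Qt a ↔ a * w ∈ Qt := Iff.rfl

/-- The key chain construction.  If `u ∈ It` survives `ν` steps of multiplication by `f`
before entering the `P`-primary ideal `Qt`, then there is a chain of `P`-primary ideals
(intersected with `It`) of length `r+1` where `r = ν - 1`, or `r = ν` when `u ∈ Pt`. -/
lemma lemU {Qt It Pt : Ideal R} (hPt : Pt.IsPrime) (hQ : Qt.IsPrimary)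
    (hrad : Qt.radical = Pt) (f u : R) (hf : f ∈ Pt) (hu : u ∈ It) (ν r : ℕ)
    (hrν : r ≤ ν) (hν : 1 ≤ ν)
    (hmem : u * f ^ ν ∈ Qt) (hnot : u * f ^ (ν - 1) ∉ Qt)
    (hwit : ∀ j, 1 ≤ j → j ≤ r → (1 ≤ ν - j ∨ u ∈ Pt)) :
    ((r + 1 : ℕ) : ℕ∞) ≤ multOf Qt It Pt := by
  classical
  have hQP : Qt ≤ Pt := hrad ▸ Ideal.le_radical
  set C : ℕ → Ideal R := fun j => eltColon Qt (u * f ^ j) with hC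
  set A : ℕ → Ideal R := fun j => ((Ideal.span {u} * C j) ⊓ Pt) ⊔ Qt with hA
  set E : ℕ → Ideal R := fun j => sat Pt hPt (A j) ⊓ It with hE
  have hAP : ∀ j, A j ≤ Pt := fun j => sup_le inf_le_right hQP
  have hformj : ∀ j, (sat Pt hPt (A j)).IsPrimary ∧ (sat Pt hPt (A j)).radical = Pt :=
    fun j => sat_isPrimary hPt hrad le_sup_right (hAP j)
  have hCmono : ∀ j, C j ≤ C (j + 1) := by
    intro j w hw
    have hw' : u * f ^ j * w ∈ Qt := hw
    have h2 : u * f ^ (j + 1) * w = u * f ^ j * w * f := by rw [pow_succ]; ring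
    exact mem_eltColon.mpr (by rw [h2]; exact Ideal.mul_mem_right _ _ hw')
  have hEmono : ∀ j, E j ≤ E (j + 1) := by
    intro j
    refine inf_le_inf_right _ (sat_mono hPt (sup_le_sup ?_ le_rfl))
    exact inf_le_inf_right _ (Ideal.mul_mono_right (hCmono j))
  have hstep : ∀ j, 1 ≤ j → j ≤ r → E (j - 1) < E j := by
    intro j h1 h2
    have hjν : j ≤ ν := h2.trans hrν
    set z : R := u * f ^ (ν - j) with hz
    have hzC : f ^ (ν - j) ∈ C j := by
      refine mem_eltColon.mpr ?_
      have h3 : u * f ^ j * f ^ (ν - j) = u * f ^ ν := by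
        rw [mul_assoc, ← pow_add]; congr 2; omega
      rw [h3]; exact hmem
    have hzU : z ∈ Ideal.span {u} * C j :=
      Ideal.mul_mem_mul (Ideal.mem_span_singleton_self u) hzC
    have hzP : z ∈ Pt := by
      rcases hwit j h1 h2 with hj | huP
      · have h4 : f ^ (ν - j) ∈ Pt := by
          have he : f ^ (ν - j) = f ^ (ν - j - 1) * f := by
            rw [← pow_succ]; congr 1; omega
          rw [he]; exact Ideal.mul_mem_left _ _ hf
        exact Ideal.mul_mem_left _ _ h4
      · exact Ideal.mul_mem_right _ _ huP
    have hzE : z ∈ E j := by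
      refine ⟨?_, Ideal.mul_mem_right _ _ hu⟩
      exact le_sat hPt (A j) (le_sup_left (a := (Ideal.span {u} * C j) ⊓ Pt) ⟨hzU, hzP⟩)
    have hzNE : z ∉ E (j - 1) := by
      rintro ⟨hsat, -⟩
      obtain ⟨s, hs, hsz⟩ := hsat
      rcases Submodule.mem_sup.mp hsz with ⟨a, ha, q, hq, heq⟩
      obtain ⟨w, hw, hwa⟩ := Ideal.mem_span_singleton_mul.mp ha.1
      have hkey : s * (u * f ^ (ν - 1)) = a * f ^ (j - 1) + q * f ^ (j - 1) := by
        rw [← add_mul, heq]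
        have h5 : z * f ^ (j - 1) = u * f ^ (ν - 1) := by
          rw [hz, mul_assoc, ← pow_add]; congr 2; omega
        rw [mul_assoc, h5]
      have haQ : a * f ^ (j - 1) ∈ Qt := by
        rw [← hwa]
        have hw' : u * f ^ (j - 1) * w ∈ Qt := hw
        have h6 : u * w * f ^ (j - 1) = u * f ^ (j - 1) * w := by ring
        rw [h6]; exact hw'
      have hmem2 : s * (u * f ^ (ν - 1)) ∈ Qt := by
        rw [hkey]; exact Ideal.add_mem _ haQ (Ideal.mul_mem_right _ _ hq)
      rcases (Ideal.isPrimary_iff.mp hQ).2 (mul_comm s _ ▸ hmem2) with h | h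
      · exact hnot h
      · exact hs (hrad ▸ h)
    have hle : E (j - 1) ≤ E j := by
      have h7 := hEmono (j - 1)
      have hj1 : j - 1 + 1 = j := by omega
      rwa [hj1] at h7
    exact lt_of_le_of_ne hle (fun hEq => hzNE (hEq ▸ hzE))
  have hbot : E 0 = Qt ⊓ It := by
    have hU0 : (Ideal.span {u} * C 0) ≤ Qt := by
      intro y hy
      obtain ⟨w, hw, hwy⟩ := Ideal.mem_span_singleton_mul.mp hy
      have hw' : u * f ^ 0 * w ∈ Qt := hw
      rw [← hwy]
      simpa using hw'
    have hA0 : A 0 = Qt := le_antisymm (sup_le (inf_le_left.trans hU0) le_rfl) le_sup_right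
    rw [hE]
    simp only
    rw [hA0, sat_primary_self hPt hQ hrad]
  have htop : E r ≤ Pt ⊓ It := inf_le_inf_right _ (sat_le_prime hPt (hAP r))
  refine le_multOf_of_chain' hPt E r ?_
    (fun j _ => ⟨sat Pt hPt (A j), (hformj j).1, (hformj j).2, rfl⟩) hbot htop
  intro j hj
  have h8 := hstep (j + 1) (by omega) (by omega)
  simpa using h8

/- ========= arithmetic helpers over ℕ∞ ========= -/

lemma enat_cancel {a b : ℕ∞} (c : ℕ) (h : a + (c : ℕ∞) ≤ b + (c : ℕ∞)) : a ≤ b :=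
  (WithTop.add_le_add_iff_right (by exact_mod_cast (ENat.coe_ne_top c))).mp h

lemma arith_a {mt SA SB : ℕ∞} {m lam cA cB : ℕ}
    (h1 : (m : ℕ∞) + 1 ≤ mt + (lam : ℕ∞))
    (h2 : (lam : ℕ∞) + (cA : ℕ∞) ≤ 1 + SA)
    (h3 : mt + SA + (cB : ℕ∞) ≤ SB + (cA : ℕ∞) + 1) :
    (m : ℕ∞) + (cB : ℕ∞) ≤ 1 + SB := by
  have key : ((m : ℕ∞) + cB) + ((1 + cA : ℕ) : ℕ∞) ≤ (1 + SB) + ((1 + cA : ℕ) : ℕ∞) := by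
    push_cast
    calc (m : ℕ∞) + cB + (1 + cA)
        = (((m : ℕ∞) + 1) + cA) + cB := by ring
      _ ≤ ((mt + lam) + cA) + cB := by gcongr
      _ = (mt + ((lam : ℕ∞) + cA)) + cB := by ring
      _ ≤ (mt + (1 + SA)) + cB := by gcongr
      _ = (mt + SA + cB) + 1 := by ring
      _ ≤ (SB + cA + 1) + 1 := by gcongr
      _ = (1 + SB) + (1 + cA) := by ring
  exact enat_cancel (1 + cA) key

lemma arith_b {SA SB : ℕ∞} {lam cA cB : ℕ}
    (h2 : (lam : ℕ∞) + (cA : ℕ∞) ≤ 1 + SA)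
    (h3 : SA + (cB : ℕ∞) ≤ SB + (cA : ℕ∞)) :
    (lam : ℕ∞) + (cB : ℕ∞) ≤ 1 + SB := by
  have key : ((lam : ℕ∞) + cB) + (cA : ℕ∞) ≤ (1 + SB) + (cA : ℕ∞) := by
    calc ((lam : ℕ∞) + cB) + cA = ((lam : ℕ∞) + cA) + cB := by ring
      _ ≤ (1 + SA) + cB := by gcongr
      _ = 1 + (SA + cB) := by ring
      _ ≤ 1 + (SB + cA) := by gcongr
      _ = (1 + SB) + cA := by ring
  exact enat_cancel cA key

lemma arith_c1 {mt SB : ℕ∞} {m cB : ℕ}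
    (h1 : (m : ℕ∞) + 1 ≤ mt) (h3 : mt + (cB : ℕ∞) ≤ SB + 1) :
    (m : ℕ∞) + (cB : ℕ∞) ≤ 1 + SB := by
  have key : ((m : ℕ∞) + cB) + (1 : ℕ∞) ≤ SB + (1 : ℕ∞) := by
    calc ((m : ℕ∞) + cB) + 1 = ((m : ℕ∞) + 1) + cB := by ring
      _ ≤ mt + cB := by gcongr
      _ ≤ SB + 1 := h3
  have h4 : (m : ℕ∞) + cB ≤ SB := by
    have := enat_cancel (a := (m : ℕ∞) + cB) (b := SB) 1 (by exact_mod_cast key)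
    exact this
  calc (m : ℕ∞) + cB ≤ SB := h4
    _ ≤ 1 + SB := le_add_self

lemma arith_c2 {mt SB : ℕ∞} {m cB : ℕ}
    (h1 : (m : ℕ∞) ≤ mt) (h3 : mt + (cB : ℕ∞) ≤ SB + 1) :
    (m : ℕ∞) + (cB : ℕ∞) ≤ 1 + SB := by
  calc (m : ℕ∞) + cB ≤ mt + cB := by gcongr
    _ ≤ SB + 1 := h3
    _ = 1 + SB := by ring

/- ========= finset sum helpers ========= -/

lemma sum_card_le {α : Type*} (s : Finset α) (M : α → ℕ∞) (h : ∀ σ ∈ s, 1 ≤ M σ) :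
    (s.card : ℕ∞) ≤ ∑ σ ∈ s, M σ := by
  have := Finset.card_nsmul_le_sum s M 1 h
  simpa using this

lemma sumS1 {α : Type*} [DecidableEq α] (A B : Finset α) (t : α) (M : α → ℕ∞)
    (hsub : insert t A ⊆ B) (htA : t ∉ A) (hone : ∀ σ ∈ B, 1 ≤ M σ) :
    M t + (∑ σ ∈ A, M σ) + (B.card : ℕ∞) ≤ (∑ σ ∈ B, M σ) + (A.card : ℕ∞) + 1 := by
  have hd : (∑ σ ∈ B \ insert t A, M σ) + (∑ σ ∈ insert t A, M σ) = ∑ σ ∈ B, M σ :=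
    Finset.sum_sdiff hsub
  have hins : ∑ σ ∈ insert t A, M σ = M t + ∑ σ ∈ A, M σ := Finset.sum_insert htA
  have hcard : (B \ insert t A).card + (A.card + 1) = B.card := by
    have h := Finset.card_sdiff_add_card_eq_card hsub
    rw [Finset.card_insert_of_notMem htA] at h
    omega
  have hge : (((B \ insert t A).card : ℕ) : ℕ∞) ≤ ∑ σ ∈ B \ insert t A, M σ :=
    sum_card_le _ _ (fun σ hσ => hone σ (Finset.sdiff_subset hσ))
  calc M t + (∑ σ ∈ A, M σ) + (B.card : ℕ∞)
      = (M t + ∑ σ ∈ A, M σ) + (((B \ insert t A).card + (A.card + 1) : ℕ) : ℕ∞) := by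
        rw [hcard]
    _ = ((M t + ∑ σ ∈ A, M σ) + ((B \ insert t A).card : ℕ∞)) + (A.card : ℕ∞) + 1 := by
        push_cast; ring
    _ ≤ ((M t + ∑ σ ∈ A, M σ) + (∑ σ ∈ B \ insert t A, M σ)) + (A.card : ℕ∞) + 1 := by
        gcongr
    _ = (∑ σ ∈ B, M σ) + (A.card : ℕ∞) + 1 := by
        rw [← hd, hins]; ring

lemma sumS2 {α : Type*} [DecidableEq α] (A B : Finset α) (M : α → ℕ∞)
    (hsub : A ⊆ B) (hone : ∀ σ ∈ B, 1 ≤ M σ) :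
    (∑ σ ∈ A, M σ) + (B.card : ℕ∞) ≤ (∑ σ ∈ B, M σ) + (A.card : ℕ∞) := by
  have hd : (∑ σ ∈ B \ A, M σ) + (∑ σ ∈ A, M σ) = ∑ σ ∈ B, M σ := Finset.sum_sdiff hsub
  have hcard : (B \ A).card + A.card = B.card := Finset.card_sdiff_add_card_eq_card hsub
  have hge : (((B \ A).card : ℕ) : ℕ∞) ≤ ∑ σ ∈ B \ A, M σ :=
    sum_card_le _ _ (fun σ hσ => hone σ (Finset.sdiff_subset hσ))
  calc (∑ σ ∈ A, M σ) + (B.card : ℕ∞)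
      = (∑ σ ∈ A, M σ) + (((B \ A).card + A.card : ℕ) : ℕ∞) := by rw [hcard]
    _ = ((∑ σ ∈ A, M σ) + ((B \ A).card : ℕ∞)) + (A.card : ℕ∞) := by push_cast; ring
    _ ≤ ((∑ σ ∈ A, M σ) + (∑ σ ∈ B \ A, M σ)) + (A.card : ℕ∞) := by gcongr
    _ = (∑ σ ∈ B, M σ) + (A.card : ℕ∞) := by rw [← hd]; ring

lemma sumS3 {α : Type*} [DecidableEq α] (B : Finset α) (t : α) (M : α → ℕ∞)
    (htB : t ∈ B) (hone : ∀ σ ∈ B, 1 ≤ M σ) :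
    M t + (B.card : ℕ∞) ≤ (∑ σ ∈ B, M σ) + 1 := by
  have h := sumS1 (∅ : Finset α) B t M (by simpa using htB) (by simp) hone
  simpa using h

/- ========= the main induction ========= -/

lemma mem_iInf_set {k : ℕ} {x : R} {s : Set (Fin k)} {Q : Fin k → Ideal R} :
    (x ∈ ⨅ j ∈ s, Q j) ↔ ∀ j ∈ s, x ∈ Q j := by
  simp [Ideal.mem_iInf]

lemma f_mem {Qt Pt : Ideal R} (hQt : Qt.IsPrimary) (hradt : Qt.radical = Pt)
    {x f : R} {m : ℕ} (h1 : 1 ≤ m) (hm : x * f ^ m ∈ Qt) (hnot : x * f ^ (m - 1) ∉ Qt) :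
    f ∈ Pt := by
  have hxy : (x * f ^ (m - 1)) * f ∈ Qt := by
    have h2 : (x * f ^ (m - 1)) * f = x * f ^ m := by
      rw [mul_assoc, ← pow_succ]; congr 2; omega
    rw [h2]; exact hm
  rcases (Ideal.isPrimary_iff.mp hQt).2 hxy with h | h
  · exact absurd h hnot
  · exact hradt ▸ h

lemma hpow_mem {Qt : Ideal R} {x f : R} {a b : ℕ} (hab : a ≤ b) (h : x * f ^ a ∈ Qt) :
    x * f ^ b ∈ Qt := by
  have h2 : x * f ^ b = (x * f ^ a) * f ^ (b - a) := by
    rw [mul_assoc, ← pow_add]; congr 2; omega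
  rw [h2]; exact Ideal.mul_mem_right _ _ h

open Finset in
open scoped Classical in
lemma Tbase {k : ℕ} (Q : Fin k → Ideal R) (P : Fin k → Ideal R)
    (hQ : ∀ i, (Q i).IsPrimary) (hP : ∀ i, (Q i).radical = P i) (f : R)
    (t : Fin k) (x : R) (m : ℕ) (h1 : 1 ≤ m)
    (hmem : ∀ σ, P σ ≤ P t → x * f ^ m ∈ Q σ)
    (hnot : x * f ^ (m - 1) ∉ Q t)
    (hx : ∀ σ, P σ < P t → x ∈ Q σ) :
    (m : ℕ∞) + ((Finset.univ.filter (fun σ => P σ ≤ P t ∧ f ∈ P σ)).card : ℕ∞) ≤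
      1 + ∑ σ ∈ Finset.univ.filter (fun σ => P σ ≤ P t ∧ f ∈ P σ),
        multOf (Q σ) (⨅ j ∈ { j : Fin k | P j < P σ }, Q j) (P σ) := by
  have hPrime : ∀ σ, (P σ).IsPrime := fun σ => hP σ ▸ Ideal.isPrime_radical (hQ σ)
  have hfPt : f ∈ P t := f_mem (hQ t) (hP t) h1 (hmem t le_rfl) hnot
  have htB : t ∈ Finset.univ.filter (fun σ => P σ ≤ P t ∧ f ∈ P σ) := by
    simp [hfPt]
  have hone : ∀ σ ∈ Finset.univ.filter (fun σ => P σ ≤ P t ∧ f ∈ P σ),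
      1 ≤ multOf (Q σ) (⨅ j ∈ { j : Fin k | P j < P σ }, Q j) (P σ) :=
    fun σ _ => one_le_multOf (hPrime σ) (hQ σ) (hP σ)
  have hS3 := sumS3 (Finset.univ.filter (fun σ => P σ ≤ P t ∧ f ∈ P σ)) t
    (fun σ => multOf (Q σ) (⨅ j ∈ { j : Fin k | P j < P σ }, Q j) (P σ)) htB hone
  have hxI : x ∈ ⨅ j ∈ { j : Fin k | P j < P t }, Q j :=
    mem_iInf_set.mpr (fun σ hσ => hx σ hσ)
  by_cases hxP : x ∈ P t
  · have hU := lemU (hPrime t) (hQ t) (hP t) f x hfPt hxI m m le_rfl h1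
      (hmem t le_rfl) hnot (fun j _ _ => Or.inr hxP)
    have h1' : (m : ℕ∞) + 1 ≤ multOf (Q t) (⨅ j ∈ { j : Fin k | P j < P t }, Q j) (P t) := by
      exact_mod_cast hU
    exact arith_c1 h1' hS3
  · have hU := lemU (hPrime t) (hQ t) (hP t) f x hfPt hxI m (m - 1) (by omega) h1
      (hmem t le_rfl) hnot (fun j hj1 hj2 => Or.inl (by omega))
    have h1' : (m : ℕ∞) ≤ multOf (Q t) (⨅ j ∈ { j : Fin k | P j < P t }, Q j) (P t) := by
      have e : m - 1 + 1 = m := by omega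
      rw [e] at hU; exact_mod_cast hU
    exact arith_c2 h1' hS3

open Finset in
open scoped Classical in
lemma Tmain {k : ℕ} (Q : Fin k → Ideal R) (P : Fin k → Ideal R)
    (hQ : ∀ i, (Q i).IsPrimary) (hP : ∀ i, (Q i).radical = P i) (f : R) :
    ∀ (N : ℕ) (t : Fin k) (x : R) (m : ℕ),
      (Finset.univ.filter (fun σ => P σ < P t)).card ≤ N →
      1 ≤ m →
      (∀ σ, P σ ≤ P t → x * f ^ m ∈ Q σ) →
      x * f ^ (m - 1) ∉ Q t →
      (m : ℕ∞) + ((Finset.univ.filter (fun σ => P σ ≤ P t ∧ f ∈ P σ)).card : ℕ∞) ≤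
        1 + ∑ σ ∈ Finset.univ.filter (fun σ => P σ ≤ P t ∧ f ∈ P σ),
          multOf (Q σ) (⨅ j ∈ { j : Fin k | P j < P σ }, Q j) (P σ) := by
  have hPrime : ∀ σ, (P σ).IsPrime := fun σ => hP σ ▸ Ideal.isPrime_radical (hQ σ)
  intro N
  induction N with
  | zero =>
    intro t x m hcard h1 hmem hnot
    refine Tbase Q P hQ hP f t x m h1 hmem hnot (fun σ hσ => ?_)
    exfalso
    have hmemf : σ ∈ Finset.univ.filter (fun σ => P σ < P t) := by simp [hσ]
    have := Finset.card_pos.mpr ⟨σ, hmemf⟩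
    omega
  | succ N ih =>
    intro t x m hcard h1 hmem hnot
    have hex : ∀ σ, P σ < P t → ∃ j, x * f ^ j ∈ Q σ := fun σ h => ⟨m, hmem σ h.le⟩
    set lamF : Fin k → ℕ :=
      fun σ => if h : P σ < P t then Nat.find (hex σ h) else 0 with hlamF
    have hspec : ∀ σ (h : P σ < P t), x * f ^ (lamF σ) ∈ Q σ := by
      intro σ h
      rw [hlamF]; simp only [dif_pos h]
      exact Nat.find_spec (hex σ h)
    have hminσ : ∀ σ (h : P σ < P t) (j : ℕ), j < lamF σ → x * f ^ j ∉ Q σ := by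
      intro σ h j hj
      rw [hlamF] at hj; simp only [dif_pos h] at hj
      exact Nat.find_min (hex σ h) hj
    have hleσ : ∀ σ (h : P σ < P t), lamF σ ≤ m := by
      intro σ h
      rw [hlamF]; simp only [dif_pos h]
      exact Nat.find_min' (hex σ h) (hmem σ h.le)
    set lam : ℕ := (Finset.univ.filter (fun σ => P σ < P t)).sup lamF with hlamdef
    have hlam_le_m : lam ≤ m := by
      refine Finset.sup_le (fun σ hσ => ?_)
      have hσ' : P σ < P t := by simpa using hσ
      exact hleσ σ hσ'
    have hlammem : ∀ σ, P σ < P t → x * f ^ lam ∈ Q σ := by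
      intro σ h
      refine hpow_mem ?_ (hspec σ h)
      exact Finset.le_sup (by simp [h])
    by_cases hlam0 : lam = 0
    · refine Tbase Q P hQ hP f t x m h1 hmem hnot (fun σ hσ => ?_)
      have h2 := hlammem σ hσ
      rw [hlam0] at h2
      simpa using h2
    · have hlam1 : 1 ≤ lam := by omega
      have hfPt : f ∈ P t := f_mem (hQ t) (hP t) h1 (hmem t le_rfl) hnot
      have hnefil : (Finset.univ.filter (fun σ => P σ < P t)).Nonempty := by
        by_contra h
        rw [Finset.not_nonempty_iff_eq_empty] at h
        rw [hlamdef, h] at hlam0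
        simp at hlam0
      obtain ⟨s', hs'mem, hs'eq⟩ :=
        Finset.exists_mem_eq_sup (Finset.univ.filter (fun σ => P σ < P t)) hnefil lamF
      have hs'lt : P s' < P t := by simpa using hs'mem
      have hlamF_eq : lamF s' = lam := by rw [hlamdef, hs'eq]
      have hnot' : x * f ^ (lam - 1) ∉ Q s' := by
        refine hminσ s' hs'lt _ ?_
        rw [hlamF_eq]; omega
      have hmem' : ∀ σ, P σ ≤ P s' → x * f ^ lam ∈ Q σ :=
        fun σ hσ => hlammem σ (lt_of_le_of_lt hσ hs'lt)
      have hcard' : (Finset.univ.filter (fun σ => P σ < P s')).card ≤ N := by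
        have hsubf : Finset.univ.filter (fun σ => P σ < P s') ⊆
            (Finset.univ.filter (fun σ => P σ < P t)).erase s' := by
          intro σ hσ
          have hσ' : P σ < P s' := by simpa using hσ
          refine Finset.mem_erase.mpr ⟨?_, by simp [hσ'.trans hs'lt]⟩
          intro hσs
          rw [hσs] at hσ'
          exact lt_irrefl _ hσ'
        have hc := Finset.card_le_card hsubf
        rw [Finset.card_erase_of_mem hs'mem] at hc
        have hpos : 1 ≤ (Finset.univ.filter (fun σ => P σ < P t)).card :=
          Finset.card_pos.mpr ⟨s', hs'mem⟩
        omega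
      have hIH := ih s' x lam hcard' hlam1 hmem' hnot'
      have hAB : Finset.univ.filter (fun σ => P σ ≤ P s' ∧ f ∈ P σ) ⊆
          Finset.univ.filter (fun σ => P σ ≤ P t ∧ f ∈ P σ) := by
        intro σ hσ
        have hσ' : P σ ≤ P s' ∧ f ∈ P σ := by simpa using hσ
        simp [hσ'.1.trans hs'lt.le, hσ'.2]
      have htA : t ∉ Finset.univ.filter (fun σ => P σ ≤ P s' ∧ f ∈ P σ) := by
        simp only [Finset.mem_filter, Finset.mem_univ, true_and, not_and]
        intro hle
        exact absurd (lt_of_le_of_lt hle hs'lt) (lt_irrefl _)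
      have htB : t ∈ Finset.univ.filter (fun σ => P σ ≤ P t ∧ f ∈ P σ) := by simp [hfPt]
      have hone : ∀ σ ∈ Finset.univ.filter (fun σ => P σ ≤ P t ∧ f ∈ P σ),
          1 ≤ multOf (Q σ) (⨅ j ∈ { j : Fin k | P j < P σ }, Q j) (P σ) :=
        fun σ _ => one_le_multOf (hPrime σ) (hQ σ) (hP σ)
      by_cases hlm : lam = m
      · rw [← hlm]
        exact arith_b hIH (sumS2 _ _ _ hAB hone)
      · have hlam_lt : lam < m := lt_of_le_of_ne hlam_le_m hlm
        have hνpos : 1 ≤ m - lam := by omega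
        have huI : x * f ^ lam ∈ ⨅ j ∈ { j : Fin k | P j < P t }, Q j :=
          mem_iInf_set.mpr (fun σ hσ => hlammem σ hσ)
        have huP : x * f ^ lam ∈ P t := by
          have h2 : x * f ^ lam = (x * f ^ (lam - 1)) * f := by
            rw [mul_assoc, ← pow_succ]; congr 2; omega
          rw [h2]; exact Ideal.mul_mem_left _ _ hfPt
        have hun : (x * f ^ lam) * f ^ (m - lam) ∈ Q t := by
          have h2 : (x * f ^ lam) * f ^ (m - lam) = x * f ^ m := by
            rw [mul_assoc, ← pow_add]; congr 2; omega
          rw [h2]; exact hmem t le_rfl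
        have hun1 : (x * f ^ lam) * f ^ (m - lam - 1) ∉ Q t := by
          have h2 : (x * f ^ lam) * f ^ (m - lam - 1) = x * f ^ (m - 1) := by
            rw [mul_assoc, ← pow_add]; congr 2; omega
          rw [h2]; exact hnot
        have hU := lemU (hPrime t) (hQ t) (hP t) f (x * f ^ lam) hfPt huI (m - lam)
          (m - lam) le_rfl hνpos hun hun1 (fun j _ _ => Or.inr huP)
        have h1' : (m : ℕ∞) + 1 ≤
            multOf (Q t) (⨅ j ∈ { j : Fin k | P j < P t }, Q j) (P t) + (lam : ℕ∞) := by
          have e : (m - lam + 1) + lam = m + 1 := by omega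
          calc (m : ℕ∞) + 1 = ((m + 1 : ℕ) : ℕ∞) := by push_cast; ring
            _ = (((m - lam + 1) + lam : ℕ) : ℕ∞) := by rw [e]
            _ = ((m - lam + 1 : ℕ) : ℕ∞) + ((lam : ℕ) : ℕ∞) := by push_cast; ring
            _ ≤ _ := add_le_add_left hU _
        refine arith_a h1' hIH ?_
        exact sumS1 _ _ t _ (Finset.insert_subset htB hAB) htA hone

end MultAux

open scoped Classical in
/-- Let `I = Q_1 ∩ … ∩ Q_k` be a minimal primary decomposition in a
Noetherian commutative ring and `f ∈ R`.  If `(I : f^{l-1}) ≠ (I : f^l)` for some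
`l ≥ 1`, then `l ≤ Σ_{i : f ∈ P_i} mult_I(P_i)`; equivalently
`ℓ_f(I) ≤ Σ_{i : f ∈ P_i} mult_I(P_i)`. -/
theorem ell_le_sum_mult
    {R : Type*} [CommRing R] [IsNoetherianRing R] {k : ℕ}
    (Q : Fin k → Ideal R) (P : Fin k → Ideal R)
    (hQ : ∀ i, (Q i).IsPrimary) (hP : ∀ i, (Q i).radical = P i)
    (hdist : ∀ i j, i ≠ j → P i ≠ P j)
    (hmin : ∀ i, ¬ ((⨅ j ∈ { j : Fin k | j ≠ i }, Q j : Ideal R) ≤ Q i))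
    (f : R) (l : ℕ) (hl : 1 ≤ l)
    (hne : { g : R | g * f ^ (l - 1) ∈ (⨅ i, Q i : Ideal R) } ≠
           { g : R | g * f ^ l ∈ (⨅ i, Q i : Ideal R) }) :
    (l : ℕ∞) ≤ ∑ i ∈ Finset.univ.filter (fun i => f ∈ P i),
      multOf (Q i) (⨅ j ∈ { j : Fin k | P j < P i }, Q j) (P i) := by
  have hsub : { g : R | g * f ^ (l - 1) ∈ (⨅ i, Q i : Ideal R) } ⊆
      { g : R | g * f ^ l ∈ (⨅ i, Q i : Ideal R) } := by
    intro g hg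
    have h2 : g * f ^ l = (g * f ^ (l - 1)) * f := by
      rw [mul_assoc, ← pow_succ]; congr 2; omega
    show g * f ^ l ∈ (⨅ i, Q i : Ideal R)
    rw [h2]
    exact Ideal.mul_mem_right _ _ hg
  obtain ⟨g, hgl, hgl1⟩ := Set.exists_of_ssubset (hsub.ssubset_of_ne hne)
  have hglQ : ∀ σ, g * f ^ l ∈ Q σ := fun σ => Ideal.mem_iInf.mp hgl σ
  obtain ⟨t, hQt⟩ : ∃ t, g * f ^ (l - 1) ∉ Q t := by
    by_contra h
    push_neg at h
    exact hgl1 (Ideal.mem_iInf.mpr h)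
  have hT := MultAux.Tmain Q P hQ hP f
    ((Finset.univ.filter (fun σ => P σ < P t)).card) t g l le_rfl hl
    (fun σ _ => hglQ σ) hQt
  have hfPt : f ∈ P t := MultAux.f_mem (hQ t) (hP t) hl (hglQ t) hQt
  have htB : t ∈ Finset.univ.filter (fun σ => P σ ≤ P t ∧ f ∈ P σ) := by simp [hfPt]
  have hsubB : Finset.univ.filter (fun σ => P σ ≤ P t ∧ f ∈ P σ) ⊆
      Finset.univ.filter (fun i => f ∈ P i) := by
    intro σ hσ
    have hσ' : P σ ≤ P t ∧ f ∈ P σ := by simpa using hσ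
    simp [hσ'.2]
  have hSB_le : (∑ σ ∈ Finset.univ.filter (fun σ => P σ ≤ P t ∧ f ∈ P σ),
        multOf (Q σ) (⨅ j ∈ { j : Fin k | P j < P σ }, Q j) (P σ)) ≤
      ∑ i ∈ Finset.univ.filter (fun i => f ∈ P i),
        multOf (Q i) (⨅ j ∈ { j : Fin k | P j < P i }, Q j) (P i) :=
    Finset.sum_le_sum_of_subset hsubB
  have hcB : (1 : ℕ∞) ≤ ((Finset.univ.filter (fun σ => P σ ≤ P t ∧ f ∈ P σ)).card : ℕ∞) := by
    have := Finset.card_pos.mpr ⟨t, htB⟩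
    exact_mod_cast this
  have hfin : (l : ℕ∞) + 1 ≤
      1 + ∑ σ ∈ Finset.univ.filter (fun σ => P σ ≤ P t ∧ f ∈ P σ),
        multOf (Q σ) (⨅ j ∈ { j : Fin k | P j < P σ }, Q j) (P σ) :=
    le_trans (add_le_add_right hcB _) hT
  have hl_le : (l : ℕ∞) ≤
      ∑ σ ∈ Finset.univ.filter (fun σ => P σ ≤ P t ∧ f ∈ P σ),
        multOf (Q σ) (⨅ j ∈ { j : Fin k | P j < P σ }, Q j) (P σ) := by
    refine MultAux.enat_cancel 1 ?_
    rw [add_comm _ ((1 : ℕ) : ℕ∞)] at *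
    simpa [add_comm] using hfin
  exact hl_le.trans hSB_le
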